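/- Let μ be an eigenvalue of the symmetric matrix A = [[A_S, Bᵀ],[B, C]] with S a star set of size k, t = n − k, μ not an eigenvalue of C. Define the n×t matrix Sᵀ via S = (B | C − μI) with columns s_1,…,s_n ∈ ℝ^t. Then μI − A = Sᵀ(μI − C)⁻¹S; in particular, with ⟨x,y⟩ := xᵀ(μI−C)⁻¹y, one has ⟨s_u,s_u⟩ = μ for all u and ⟨s_u,s_v⟩ = −A_{uv} for u ≠ v. -/

import Mathlib

open Matrix

/-- The bilinear form `⟨x, y⟩ = xᵀ (μI - C)⁻¹ y` associated with a star complement. -/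
noncomputable def starBilin {t : ℕ} (μ : ℝ) (C : Matrix (Fin t) (Fin t) ℝ) (x y : Fin t → ℝ) : ℝ :=
  x ⬝ᵥ ((μ • (1 : Matrix (Fin t) (Fin t) ℝ) - C)⁻¹).mulVec y

theorem extended_reconstruction {k t : ℕ}
    (AS : Matrix (Fin k) (Fin k) ℝ) (B : Matrix (Fin t) (Fin k) ℝ)
    (C : Matrix (Fin t) (Fin t) ℝ)
    (A : Matrix (Fin k ⊕ Fin t) (Fin k ⊕ Fin t) ℝ)
    (hA : A = Matrix.fromBlocks AS Bᵀ B C)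
    (hsymm : A.IsSymm)
    (hdiag : ∀ p, A p p = 0)
    (μ : ℝ)
    (hC : ¬ ∃ w : Fin t → ℝ, w ≠ 0 ∧ C.mulVec w = μ • w)
    (hrec : μ • (1 : Matrix (Fin k) (Fin k) ℝ) - AS =
      Bᵀ * (μ • (1 : Matrix (Fin t) (Fin t) ℝ) - C)⁻¹ * B)
    (S : Matrix (Fin t) (Fin k ⊕ Fin t) ℝ)
    (hS : S = Matrix.fromCols B (C - μ • (1 : Matrix (Fin t) (Fin t) ℝ))) :
    μ • (1 : Matrix (Fin k ⊕ Fin t) (Fin k ⊕ Fin t) ℝ) - A =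
        Sᵀ * (μ • (1 : Matrix (Fin t) (Fin t) ℝ) - C)⁻¹ * S ∧
      (∀ u, starBilin μ C (fun i => S i u) (fun i => S i u) = μ) ∧
      (∀ u v, u ≠ v → starBilin μ C (fun i => S i u) (fun i => S i v) = - A u v) := by
  set M : Matrix (Fin t) (Fin t) ℝ := μ • (1 : Matrix (Fin t) (Fin t) ℝ) - C with hM
  have hdet : M.det ≠ 0 := by
    intro h
    obtain ⟨v, hv, hv0⟩ := Matrix.exists_mulVec_eq_zero_iff.mpr h
    refine hC ⟨v, hv, ?_⟩
    have h1 : μ • v - C.mulVec v = 0 := by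
      simpa [hM, Matrix.sub_mulVec, Matrix.smul_mulVec] using hv0
    exact (sub_eq_zero.mp h1).symm
  have hunit : IsUnit M.det := isUnit_iff_ne_zero.mpr hdet
  have hMinvM : M⁻¹ * M = 1 := Matrix.nonsing_inv_mul M hunit
  have hMMinv : M * M⁻¹ = 1 := Matrix.mul_nonsing_inv M hunit
  have hCsym : Cᵀ = C := by
    ext i j
    have h1 := hsymm.apply (Sum.inr j) (Sum.inr i)
    exact (by simpa [hA] using h1 : C i j = C j i).symm
  have hMsym : Mᵀ = M := by
    simp [hM, transpose_sub, hCsym, Matrix.transpose_smul]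
  have hCm : C - μ • (1 : Matrix (Fin t) (Fin t) ℝ) = -M := by
    simp [hM]
  have key : μ • (1 : Matrix (Fin k ⊕ Fin t) (Fin k ⊕ Fin t) ℝ) - A = Sᵀ * M⁻¹ * S := by
    rw [hS, hA, hCm, Matrix.transpose_fromCols, Matrix.transpose_neg, hMsym,
      Matrix.fromRows_mul, Matrix.fromRows_mul_fromCols, ← Matrix.fromBlocks_one,
      Matrix.fromBlocks_smul, sub_eq_add_neg, Matrix.fromBlocks_neg, Matrix.fromBlocks_add,
      Matrix.fromBlocks_inj]
    refine ⟨?_, ?_, ?_, ?_⟩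
    · rw [← sub_eq_add_neg]; exact hrec
    · simp [Matrix.mul_neg, Matrix.mul_assoc, hMinvM]
    · simp [Matrix.neg_mul, hMMinv]
    · rw [Matrix.neg_mul, hMMinv, Matrix.neg_mul, Matrix.one_mul, neg_neg, hM, sub_eq_add_neg]
  have entry : ∀ u v, starBilin μ C (fun i => S i u) (fun i => S i v) =
      (μ • (1 : Matrix (Fin k ⊕ Fin t) (Fin k ⊕ Fin t) ℝ) - A) u v := by
    intro u v
    rw [key, Matrix.mul_assoc]
    simp [starBilin, Matrix.mul_apply, Matrix.mulVec, dotProduct, ← hM]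
  refine ⟨key, ?_, ?_⟩
  · intro u
    rw [entry]
    simp [hdiag u, Matrix.one_apply]
  · intro u v huv
    rw [entry]
    simp [Matrix.one_apply_ne huv, Matrix.sub_apply, Matrix.smul_apply]
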